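/- Let p be a prime and v the p-adic valuation on ℚ_p (or on the fraction field of a complete DVR). Let α₁, α₂, β₁, β₂, γ₁, γ₂ be nonzero elements with valuations a₁, a₂, b₁, b₂, c₁, c₂ ≥ 0. If the multiset of valuations {v(α_i β_j γ_k)} equals {0,0,0,0,f,f,f,f} with f > 0, then after reordering within each pair, (a₁,a₂), (b₁,b₂), (c₁,c₂) consist of two pairs equal to (0,0) and one pair equal to (0,f). -/

import Mathlib

lemma pair01 {x y f : ℤ} (h : x = 0 ∧ y = f ∨ x = f ∧ y = 0) :
    ({x, y} : Multiset ℤ) = {0, f} := by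
  rcases h with ⟨rfl, rfl⟩ | ⟨rfl, rfl⟩
  · rfl
  · exact Multiset.cons_swap _ _ _

lemma sub3 (f x y z : ℤ) (hf : 0 < f) (hx0 : 0 ≤ x) (hy0 : 0 ≤ y) (hz0 : 0 ≤ z)
    (hxy : x+y = 0 ∨ x+y = f) (hxz : x+z = 0 ∨ x+z = f) (hyz : y+z = 0 ∨ y+z = f)
    (hxyz : x+y+z = 0 ∨ x+y+z = f)
    (hne : ¬(x = 0 ∧ y = 0 ∧ z = 0)) :
    (x = f ∧ y = 0 ∧ z = 0) ∨ (x = 0 ∧ y = f ∧ z = 0) ∨ (x = 0 ∧ y = 0 ∧ z = f) := by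
  omega

lemma keyInt (f a1 a2 b1 b2 c1 c2 : ℤ) (hf : 0 < f)
    (ha1 : 0 ≤ a1) (ha2 : 0 ≤ a2) (hb1 : 0 ≤ b1) (hb2 : 0 ≤ b2)
    (hc1 : 0 ≤ c1) (hc2 : 0 ≤ c2)
    (hm : ({a1+b1+c1, a1+b1+c2, a1+b2+c1, a1+b2+c2,
            a2+b1+c1, a2+b1+c2, a2+b2+c1, a2+b2+c2} : Multiset ℤ)
        = Multiset.replicate 4 0 + Multiset.replicate 4 f) :
    (({a1, a2} : Multiset ℤ) = {0, f} ∧ ({b1, b2} : Multiset ℤ) = {0, 0} ∧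
      ({c1, c2} : Multiset ℤ) = {0, 0}) ∨
    (({a1, a2} : Multiset ℤ) = {0, 0} ∧ ({b1, b2} : Multiset ℤ) = {0, f} ∧
      ({c1, c2} : Multiset ℤ) = {0, 0}) ∨
    (({a1, a2} : Multiset ℤ) = {0, 0} ∧ ({b1, b2} : Multiset ℤ) = {0, 0} ∧
      ({c1, c2} : Multiset ℤ) = {0, f}) := by
  have hall : ∀ x ∈ ({a1+b1+c1, a1+b1+c2, a1+b2+c1, a1+b2+c2,
      a2+b1+c1, a2+b1+c2, a2+b2+c1, a2+b2+c2} : Multiset ℤ), x = 0 ∨ x = f := by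
    rw [hm]
    intro x hx
    rcases Multiset.mem_add.1 hx with h | h
    · exact Or.inl (Multiset.eq_of_mem_replicate h)
    · exact Or.inr (Multiset.eq_of_mem_replicate h)
  have h0 : (0 : ℤ) ∈ ({a1+b1+c1, a1+b1+c2, a1+b2+c1, a1+b2+c2,
      a2+b1+c1, a2+b1+c2, a2+b2+c1, a2+b2+c2} : Multiset ℤ) := by
    rw [hm]; exact Multiset.mem_add.2 (Or.inl (by simp [Multiset.mem_replicate]))
  have hF : f ∈ ({a1+b1+c1, a1+b1+c2, a1+b2+c1, a1+b2+c2,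
      a2+b1+c1, a2+b1+c2, a2+b2+c1, a2+b2+c2} : Multiset ℤ) := by
    rw [hm]; exact Multiset.mem_add.2 (Or.inr (by simp [Multiset.mem_replicate]))
  simp only [Multiset.insert_eq_cons, Multiset.mem_cons, Multiset.mem_singleton,
    forall_eq_or_imp, forall_eq] at hall h0 hF
  clear hm
  have hne : ¬(a1 = 0 ∧ a2 = 0 ∧ b1 = 0 ∧ b2 = 0 ∧ c1 = 0 ∧ c2 = 0) := by
    rcases hF with h|h|h|h|h|h|h|h <;> omega
  clear hF
  obtain ⟨h1, h2, h3, h4, h5, h6, h7, h8⟩ := hall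
  rcases h0 with h|h|h|h|h|h|h|h
  · -- a1 = b1 = c1 = 0, frees a2 b2 c2
    obtain ⟨rfl, rfl, rfl⟩ : a1 = 0 ∧ b1 = 0 ∧ c1 = 0 := by omega
    rcases sub3 f a2 b2 c2 hf ha2 hb2 hc2 (by omega) (by omega) (by omega) (by omega)
        (by omega) with ⟨e1, e2, e3⟩ | ⟨e1, e2, e3⟩ | ⟨e1, e2, e3⟩
    · exact Or.inl ⟨pair01 (Or.inl ⟨rfl, e1⟩), by rw [e2], by rw [e3]⟩
    · exact Or.inr (Or.inl ⟨by rw [e1], pair01 (Or.inl ⟨rfl, e2⟩), by rw [e3]⟩)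
    · exact Or.inr (Or.inr ⟨by rw [e1], by rw [e2], pair01 (Or.inl ⟨rfl, e3⟩)⟩)
  · -- a1 = b1 = c2 = 0, frees a2 b2 c1
    obtain ⟨rfl, rfl, rfl⟩ : a1 = 0 ∧ b1 = 0 ∧ c2 = 0 := by omega
    rcases sub3 f a2 b2 c1 hf ha2 hb2 hc1 (by omega) (by omega) (by omega) (by omega)
        (by omega) with ⟨e1, e2, e3⟩ | ⟨e1, e2, e3⟩ | ⟨e1, e2, e3⟩
    · exact Or.inl ⟨pair01 (Or.inl ⟨rfl, e1⟩), by rw [e2], by rw [e3]⟩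
    · exact Or.inr (Or.inl ⟨by rw [e1], pair01 (Or.inl ⟨rfl, e2⟩), by rw [e3]⟩)
    · exact Or.inr (Or.inr ⟨by rw [e1], by rw [e2], pair01 (Or.inr ⟨e3, rfl⟩)⟩)
  · -- a1 = b2 = c1 = 0, frees a2 b1 c2
    obtain ⟨rfl, rfl, rfl⟩ : a1 = 0 ∧ b2 = 0 ∧ c1 = 0 := by omega
    rcases sub3 f a2 b1 c2 hf ha2 hb1 hc2 (by omega) (by omega) (by omega) (by omega)
        (by omega) with ⟨e1, e2, e3⟩ | ⟨e1, e2, e3⟩ | ⟨e1, e2, e3⟩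
    · exact Or.inl ⟨pair01 (Or.inl ⟨rfl, e1⟩), by rw [e2], by rw [e3]⟩
    · exact Or.inr (Or.inl ⟨by rw [e1], pair01 (Or.inr ⟨e2, rfl⟩), by rw [e3]⟩)
    · exact Or.inr (Or.inr ⟨by rw [e1], by rw [e2], pair01 (Or.inl ⟨rfl, e3⟩)⟩)
  · -- a1 = b2 = c2 = 0, frees a2 b1 c1
    obtain ⟨rfl, rfl, rfl⟩ : a1 = 0 ∧ b2 = 0 ∧ c2 = 0 := by omega
    rcases sub3 f a2 b1 c1 hf ha2 hb1 hc1 (by omega) (by omega) (by omega) (by omega)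
        (by omega) with ⟨e1, e2, e3⟩ | ⟨e1, e2, e3⟩ | ⟨e1, e2, e3⟩
    · exact Or.inl ⟨pair01 (Or.inl ⟨rfl, e1⟩), by rw [e2], by rw [e3]⟩
    · exact Or.inr (Or.inl ⟨by rw [e1], pair01 (Or.inr ⟨e2, rfl⟩), by rw [e3]⟩)
    · exact Or.inr (Or.inr ⟨by rw [e1], by rw [e2], pair01 (Or.inr ⟨e3, rfl⟩)⟩)
  · -- a2 = b1 = c1 = 0, frees a1 b2 c2
    obtain ⟨rfl, rfl, rfl⟩ : a2 = 0 ∧ b1 = 0 ∧ c1 = 0 := by omega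
    rcases sub3 f a1 b2 c2 hf ha1 hb2 hc2 (by omega) (by omega) (by omega) (by omega)
        (by omega) with ⟨e1, e2, e3⟩ | ⟨e1, e2, e3⟩ | ⟨e1, e2, e3⟩
    · exact Or.inl ⟨pair01 (Or.inr ⟨e1, rfl⟩), by rw [e2], by rw [e3]⟩
    · exact Or.inr (Or.inl ⟨by rw [e1], pair01 (Or.inl ⟨rfl, e2⟩), by rw [e3]⟩)
    · exact Or.inr (Or.inr ⟨by rw [e1], by rw [e2], pair01 (Or.inl ⟨rfl, e3⟩)⟩)
  · -- a2 = b1 = c2 = 0, frees a1 b2 c1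
    obtain ⟨rfl, rfl, rfl⟩ : a2 = 0 ∧ b1 = 0 ∧ c2 = 0 := by omega
    rcases sub3 f a1 b2 c1 hf ha1 hb2 hc1 (by omega) (by omega) (by omega) (by omega)
        (by omega) with ⟨e1, e2, e3⟩ | ⟨e1, e2, e3⟩ | ⟨e1, e2, e3⟩
    · exact Or.inl ⟨pair01 (Or.inr ⟨e1, rfl⟩), by rw [e2], by rw [e3]⟩
    · exact Or.inr (Or.inl ⟨by rw [e1], pair01 (Or.inl ⟨rfl, e2⟩), by rw [e3]⟩)
    · exact Or.inr (Or.inr ⟨by rw [e1], by rw [e2], pair01 (Or.inr ⟨e3, rfl⟩)⟩)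
  · -- a2 = b2 = c1 = 0, frees a1 b1 c2
    obtain ⟨rfl, rfl, rfl⟩ : a2 = 0 ∧ b2 = 0 ∧ c1 = 0 := by omega
    rcases sub3 f a1 b1 c2 hf ha1 hb1 hc2 (by omega) (by omega) (by omega) (by omega)
        (by omega) with ⟨e1, e2, e3⟩ | ⟨e1, e2, e3⟩ | ⟨e1, e2, e3⟩
    · exact Or.inl ⟨pair01 (Or.inr ⟨e1, rfl⟩), by rw [e2], by rw [e3]⟩
    · exact Or.inr (Or.inl ⟨by rw [e1], pair01 (Or.inr ⟨e2, rfl⟩), by rw [e3]⟩)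
    · exact Or.inr (Or.inr ⟨by rw [e1], by rw [e2], pair01 (Or.inl ⟨rfl, e3⟩)⟩)
  · -- a2 = b2 = c2 = 0, frees a1 b1 c1
    obtain ⟨rfl, rfl, rfl⟩ : a2 = 0 ∧ b2 = 0 ∧ c2 = 0 := by omega
    rcases sub3 f a1 b1 c1 hf ha1 hb1 hc1 (by omega) (by omega) (by omega) (by omega)
        (by omega) with ⟨e1, e2, e3⟩ | ⟨e1, e2, e3⟩ | ⟨e1, e2, e3⟩
    · exact Or.inl ⟨pair01 (Or.inr ⟨e1, rfl⟩), by rw [e2], by rw [e3]⟩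
    · exact Or.inr (Or.inl ⟨by rw [e1], pair01 (Or.inr ⟨e2, rfl⟩), by rw [e3]⟩)
    · exact Or.inr (Or.inr ⟨by rw [e1], by rw [e2], pair01 (Or.inr ⟨e3, rfl⟩)⟩)


/-- (Lemma 5.2, valuation form, case m = 2.) If nonzero `p`-adic numbers
`α₁, α₂, β₁, β₂, γ₁, γ₂` have nonnegative valuations and the eight triple
products `α_i β_j γ_k` have valuation multiset `{0,0,0,0,f,f,f,f}` with `f > 0`,
then (up to reordering within each pair) two of the valuation pairs are `{0,0}`
and one is `{0,f}`. -/
theorem stmt11 (p : ℕ) [Fact p.Prime] (f : ℤ) (hf : 0 < f)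
    (α₁ α₂ β₁ β₂ γ₁ γ₂ : ℚ_[p])
    (hα₁ : α₁ ≠ 0) (hα₂ : α₂ ≠ 0) (hβ₁ : β₁ ≠ 0) (hβ₂ : β₂ ≠ 0)
    (hγ₁ : γ₁ ≠ 0) (hγ₂ : γ₂ ≠ 0)
    (ha₁ : 0 ≤ α₁.valuation) (ha₂ : 0 ≤ α₂.valuation)
    (hb₁ : 0 ≤ β₁.valuation) (hb₂ : 0 ≤ β₂.valuation)
    (hc₁ : 0 ≤ γ₁.valuation) (hc₂ : 0 ≤ γ₂.valuation)
    (hmul : ({(α₁ * β₁ * γ₁).valuation, (α₁ * β₁ * γ₂).valuation,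
              (α₁ * β₂ * γ₁).valuation, (α₁ * β₂ * γ₂).valuation,
              (α₂ * β₁ * γ₁).valuation, (α₂ * β₁ * γ₂).valuation,
              (α₂ * β₂ * γ₁).valuation, (α₂ * β₂ * γ₂).valuation} : Multiset ℤ)
        = Multiset.replicate 4 0 + Multiset.replicate 4 f) :
    (({α₁.valuation, α₂.valuation} : Multiset ℤ) = {0, f} ∧
      ({β₁.valuation, β₂.valuation} : Multiset ℤ) = {0, 0} ∧
      ({γ₁.valuation, γ₂.valuation} : Multiset ℤ) = {0, 0}) ∨
    (({α₁.valuation, α₂.valuation} : Multiset ℤ) = {0, 0} ∧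
      ({β₁.valuation, β₂.valuation} : Multiset ℤ) = {0, f} ∧
      ({γ₁.valuation, γ₂.valuation} : Multiset ℤ) = {0, 0}) ∨
    (({α₁.valuation, α₂.valuation} : Multiset ℤ) = {0, 0} ∧
      ({β₁.valuation, β₂.valuation} : Multiset ℤ) = {0, 0} ∧
      ({γ₁.valuation, γ₂.valuation} : Multiset ℤ) = {0, f}) := by
  simp only [Padic.valuation_mul (mul_ne_zero hα₁ hβ₁) hγ₁,
    Padic.valuation_mul (mul_ne_zero hα₁ hβ₂) hγ₁,
    Padic.valuation_mul (mul_ne_zero hα₂ hβ₁) hγ₁,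
    Padic.valuation_mul (mul_ne_zero hα₂ hβ₂) hγ₁,
    Padic.valuation_mul (mul_ne_zero hα₁ hβ₁) hγ₂,
    Padic.valuation_mul (mul_ne_zero hα₁ hβ₂) hγ₂,
    Padic.valuation_mul (mul_ne_zero hα₂ hβ₁) hγ₂,
    Padic.valuation_mul (mul_ne_zero hα₂ hβ₂) hγ₂,
    Padic.valuation_mul hα₁ hβ₁, Padic.valuation_mul hα₁ hβ₂,
    Padic.valuation_mul hα₂ hβ₁, Padic.valuation_mul hα₂ hβ₂] at hmul
  exact keyInt f α₁.valuation α₂.valuation β₁.valuation β₂.valuation γ₁.valuation γ₂.valuation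
    hf ha₁ ha₂ hb₁ hb₂ hc₁ hc₂ hmul
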